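/- Every k₁-Hausdorff topological space is KC: if every compact subspace of X is Hausdorff in the subspace topology, then every compact subset of X is closed in X. -/
import Mathlib

/-- Every k₁-Hausdorff space is KC: if every compact subspace of `X` is Hausdorff
in the subspace topology, then every compact subset of `X` is closed. -/
theorem k1Hausdorff_is_KC {X : Type*} [TopologicalSpace X]
    (hk1 : ∀ K : Set X, IsCompact K → T2Space K) :
    ∀ K : Set X, IsCompact K → IsClosed K := by
  intro K hK
  refine isClosed_of_closure_subset fun x hx => ?_
  by_contra hxK
  set L : Set X := insert x K with hLdef
  have hL : IsCompact L := hK.insert x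
  haveI : T2Space L := hk1 L hL
  -- the copy of K inside L
  set S : Set L := Subtype.val ⁻¹' K with hSdef
  have hSc : IsCompact S := by
    rw [Subtype.isCompact_iff]
    have : Subtype.val '' S = K := by
      ext y
      simp only [hSdef, Set.mem_image, Set.mem_preimage, Subtype.exists,
        exists_and_right, exists_eq_right]
      exact ⟨fun ⟨_, h⟩ => h, fun h => ⟨Set.mem_insert_iff.2 (Or.inr h), h⟩⟩
    rwa [this]
  have hScl : IsClosed S := hSc.isClosed
  have hxL : x ∈ L := Set.mem_insert x K
  have hxS : (⟨x, hxL⟩ : L) ∉ S := hxK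
  have hopen : IsOpen (Sᶜ : Set L) := hScl.isOpen_compl
  rw [isOpen_induced_iff] at hopen
  obtain ⟨U, hU, hUS⟩ := hopen
  have hxU : x ∈ U := by
    have : (⟨x, hxL⟩ : L) ∈ Sᶜ := hxS
    rw [← hUS] at this
    exact this
  have : (U ∩ K).Nonempty := mem_closure_iff.1 hx U hU hxU
  obtain ⟨y, hyU, hyK⟩ := this
  have hyL : y ∈ L := Set.mem_insert_iff.2 (Or.inr hyK)
  have : (⟨y, hyL⟩ : L) ∈ Sᶜ := by rw [← hUS]; exact hyU
  exact this hyK
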